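/- For a 1-writer program partitioned into blocks by a preemption point set 𝒫, if the conflict graph on the outer blocks (with an edge b_r → b_w whenever the last write to some variable x in b_w conflicts with a read of x in b_r) contains a directed cycle, then there is no sequentially consistent interleaving of the block-program. -/

import Mathlib

/-- Memory events: reads and writes of natural-number values to variables of type `V`. -/
inductive Event (V : Type) where
  | read  (x : V) (d : ℕ)
  | write (x : V) (d : ℕ)
deriving DecidableEq

variable {V ι : Type}

/-- A sequence of events is sequentially consistent (SC): every read `r(x,d)` has a
preceding write `w(x,d)` with no write of a different value to `x` in between. -/
def SC (σ : List (Event V)) : Prop :=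
  ∀ p x d, σ[(p : ℕ)]? = some (Event.read x d) →
    ∃ q, q < p ∧ σ[q]? = some (Event.write x d) ∧
      ∀ r, q < r → r < p → ∀ d', d' ≠ d → σ[r]? ≠ some (Event.write x d')

/-- `σ` is an interleaving of the given threads: its restriction to each
thread identifier equals that thread's event sequence. -/
def IsInterleaving [DecidableEq ι] (threads : ι → List (Event V)) (σ : List (ι × Event V)) : Prop :=
  ∀ i, σ.filterMap (fun a => if a.1 = i then some a.2 else none) = threads i

/-- A preemption occurs at position `j`: the events at `j` and `j+1` are from
different threads and the event at `j` is not the last event of its thread. -/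
def PreemptionAt (σ : List (ι × Event V)) (j : ℕ) : Prop :=
  ∃ a b, σ[j]? = some a ∧ σ[j + 1]? = some b ∧ a.1 ≠ b.1 ∧
    ∃ r c, j < r ∧ σ[r]? = some c ∧ c.1 = a.1

open Classical in
/-- The number of preemption positions of `σ`. -/
noncomputable def numPreemptions (σ : List (ι × Event V)) : ℕ :=
  ((Finset.range σ.length).filter fun j => PreemptionAt σ j).card

open Classical in
/-- The number of context switches of `σ` (adjacent events of different threads). -/
noncomputable def numSwitches (σ : List (ι × Event V)) : ℕ :=
  ((Finset.range σ.length).filter fun j =>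
    ∃ a b, σ[j]? = some a ∧ σ[j + 1]? = some b ∧ a.1 ≠ b.1).card

/-- The (increasing) list of positions of `σ` carrying events of thread `i`. -/
def threadPositions [DecidableEq ι] (σ : List (ι × Event V)) (i : ι) : List ℕ :=
  (List.range σ.length).filter fun p => decide ((σ[p]?).map Prod.fst = some i)

/-- The position in `σ` of the `j`-th event of thread `i`. -/
def posOf [DecidableEq ι] (σ : List (ι × Event V)) (i : ι) (j : ℕ) : ℕ :=
  (threadPositions σ i).getD j 0

/-- All events of thread `t` occur before all events of thread `t'` in `σ`. -/
def ThreadBefore [DecidableEq ι] (σ : List (ι × Event V)) (t t' : ι) : Prop :=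
  ∀ p ∈ threadPositions σ t, ∀ q ∈ threadPositions σ t', p < q

/-- The event is a write to variable `x`. -/
def writesTo (x : V) : Event V → Prop
  | Event.write y _ => y = x
  | _ => False

/-- A 1-writer program: for each variable, a single thread performs all writes to it. -/
def OneWriter (threads : ι → List (Event V)) : Prop :=
  ∀ x i i', (∃ e ∈ threads i, writesTo x e) → (∃ e ∈ threads i', writesTo x e) → i = i'

/-- The events of thread `i` from its index `s` onwards appear contiguously in `σ`. -/
def ContiguousFrom [DecidableEq ι] (σ : List (ι × Event V)) (i : ι) (s : ℕ) : Prop :=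
  ∀ j, s ≤ j → j + 1 < (threadPositions σ i).length → posOf σ i (j + 1) = posOf σ i j + 1

/-- Conflict-graph edge `tr → tw` between outer blocks (suffixes of the threads
starting at indices `s tr`, `s tw`): the last write to some variable `x` in the
outer block of `tw` conflicts with a read of `x` in the outer block of `tr`. -/
def ConflictEdge [DecidableEq ι] (threads : ι → List (Event V)) (s : ι → ℕ) (tr tw : ι) : Prop :=
  tr ≠ tw ∧ ∃ x d d' jr jw, d ≠ d' ∧
    s tr ≤ jr ∧ (threads tr)[jr]? = some (Event.read x d) ∧
    s tw ≤ jw ∧ (threads tw)[jw]? = some (Event.write x d') ∧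
    ∀ j d'', jw < j → (threads tw)[j]? ≠ some (Event.write x d'')

/-- Splitting a list into contiguous blocks immediately after each position in `cut`. -/
def splitAtCuts {α : Type} (l : List α) (cut : Finset ℕ) : List (List α) :=
  let cs := cut.sort (· ≤ ·)
  ((0 :: cs.map (· + 1)).zip (cs.map (· + 1) ++ [l.length])).map fun p => (l.take p.2).drop p.1

section Aux
variable {V ι : Type} [DecidableEq ι]

lemma tp_cons (a : ι × Event V) (σ : List (ι × Event V)) (i : ι) :
    threadPositions (a :: σ) i =
      (if a.1 = i then [0] else []) ++ (threadPositions σ i).map Nat.succ := by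
  unfold threadPositions
  rw [List.length_cons, List.range_succ_eq_map, List.filter_cons, List.filter_map]
  have h2 : ∀ p : ℕ, ((fun p => decide (((a :: σ)[p]?).map Prod.fst = some i)) ∘ Nat.succ) p
      = (fun p => decide ((σ[p]?).map Prod.fst = some i)) p := by
    intro p; simp
  rw [List.filter_congr (fun x _ => h2 x)]
  by_cases h : a.1 = i <;> simp [h]

lemma tp_key (σ : List (ι × Event V)) (i : ι) (j : ℕ) :
    ((threadPositions σ i)[j]?).bind (fun p => σ[p]?) =
      ((σ.filterMap fun a => if a.1 = i then some a.2 else none)[j]?).map fun e => (i, e) := by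
  induction σ generalizing j with
  | nil => simp [threadPositions]
  | cons a σ ih =>
    rw [tp_cons, List.filterMap_cons]
    have hmap : ∀ j : ℕ, (((threadPositions σ i).map Nat.succ)[j]?).bind (fun p : ℕ => (a :: σ)[p]?)
        = ((threadPositions σ i)[j]?).bind (fun p : ℕ => σ[p]?) := by
      intro j
      rw [List.getElem?_map]
      cases (threadPositions σ i)[j]? <;> simp
    by_cases h : a.1 = i
    · simp only [if_pos h]
      cases j with
      | zero =>
        have : a = (i, a.2) := by rw [← h]
        simp [← this]
      | succ j =>
        simp only [List.singleton_append, List.getElem?_cons_succ]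
        rw [hmap j]; exact ih j
    · simp only [if_neg h, List.nil_append]
      rw [hmap j, ih j]

lemma tp_pairwise (σ : List (ι × Event V)) (i : ι) :
    (threadPositions σ i).Pairwise (· < ·) :=
  List.pairwise_lt_range.filter _

lemma mem_tp {σ : List (ι × Event V)} {i : ι} {p : ℕ} :
    p ∈ threadPositions σ i ↔ p < σ.length ∧ (σ[p]?).map Prod.fst = some i := by
  simp [threadPositions, List.mem_filter, List.mem_range]

lemma posOf_eq_get {σ : List (ι × Event V)} {i : ι} {j : ℕ}
    (h : j < (threadPositions σ i).length) :
    posOf σ i j = (threadPositions σ i).get ⟨j, h⟩ := by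
  simp [posOf, List.getD_eq_getElem?_getD, List.getElem?_eq_getElem h]

variable {threads : ι → List (Event V)} {σ : List (ι × Event V)}

lemma tp_length (hil : IsInterleaving threads σ) (i : ι) :
    (threadPositions σ i).length = (threads i).length := by
  have h := tp_key σ i
  rw [hil i] at h
  by_contra hne
  rcases Nat.lt_or_ge (threadPositions σ i).length (threads i).length with hlt | hge
  · have := h (threadPositions σ i).length
    rw [List.getElem?_eq_none le_rfl, List.getElem?_eq_getElem hlt] at this
    simp at this
  · have hlt : (threads i).length < (threadPositions σ i).length := lt_of_le_of_ne hge (Ne.symm hne)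
    have hthis := h (threads i).length
    rw [List.getElem?_eq_none le_rfl, List.getElem?_eq_getElem hlt] at hthis
    have hp : (threadPositions σ i)[(threads i).length] ∈ threadPositions σ i :=
      List.getElem_mem hlt
    rcases mem_tp.1 hp with ⟨hlen, hfst⟩
    rw [Option.bind_some] at hthis
    rw [hthis] at hfst
    simp at hfst

lemma get_posOf (hil : IsInterleaving threads σ) {i : ι} {j : ℕ} {e : Event V}
    (he : (threads i)[j]? = some e) :
    σ[posOf σ i j]? = some (i, e) := by
  obtain ⟨hj, -⟩ := List.getElem?_eq_some_iff.1 he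
  have hj' : j < (threadPositions σ i).length := (tp_length hil i).symm ▸ hj
  have h := tp_key σ i j
  rw [hil i, he, List.getElem?_eq_getElem hj'] at h
  rw [posOf_eq_get hj']
  simpa using h

lemma posOf_strictMono (hil : IsInterleaving threads σ) {i : ι} {m j : ℕ}
    (hmj : m < j) (hj : j < (threads i).length) :
    posOf σ i m < posOf σ i j := by
  have hj' : j < (threadPositions σ i).length := (tp_length hil i).symm ▸ hj
  have hm' : m < (threadPositions σ i).length := lt_trans hmj hj'
  have := List.pairwise_iff_get.1 (tp_pairwise σ i) ⟨m, hm'⟩ ⟨j, hj'⟩ hmj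
  rw [posOf_eq_get hm', posOf_eq_get hj']
  exact this

lemma pos_index (hil : IsInterleaving threads σ) {i : ι} {q : ℕ} {e : Event V}
    (hq : σ[q]? = some (i, e)) :
    ∃ m, (threads i)[m]? = some e ∧ q = posOf σ i m := by
  obtain ⟨hqlen, -⟩ := List.getElem?_eq_some_iff.1 hq
  have hmem : q ∈ threadPositions σ i := mem_tp.2 ⟨hqlen, by rw [hq]; rfl⟩
  rcases List.mem_iff_getElem.1 hmem with ⟨m, hm, hget⟩
  refine ⟨m, ?_, ?_⟩
  · have h := tp_key σ i m
    rw [hil i, List.getElem?_eq_getElem hm, hget, Option.bind_some, hq] at h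
    cases he : (threads i)[m]? with
    | none => rw [he] at h; simp at h
    | some e' => rw [he] at h; simp at h; rw [h]
  · rw [← hget, posOf_eq_get hm]; rfl

end Aux

section Aux2
variable {V ι : Type} [DecidableEq ι] {threads : ι → List (Event V)} {σ : List (ι × Event V)}

lemma posOf_add (hil : IsInterleaving threads σ) {i : ι} {si : ℕ}
    (hcont : ContiguousFrom σ i si) {j : ℕ} (hsj : si ≤ j) (hj : j < (threads i).length) :
    posOf σ i j = posOf σ i si + (j - si) := by
  induction j, hsj using Nat.le_induction with
  | base => simp
  | succ j hsj ih =>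
    have hj' : j + 1 < (threadPositions σ i).length := (tp_length hil i).symm ▸ hj
    rw [hcont j hsj hj', ih (lt_trans (Nat.lt_succ_self j) hj)]
    omega

lemma interval_mem (hil : IsInterleaving threads σ) {i : ι} {si : ℕ}
    (hcont : ContiguousFrom σ i si) (hsi : si < (threads i).length)
    {q : ℕ} (h1 : posOf σ i si ≤ q) (h2 : q ≤ posOf σ i ((threads i).length - 1)) :
    ∃ e, σ[q]? = some (i, e) := by
  have hend := posOf_add hil hcont (j := (threads i).length - 1) (by omega) (by omega)
  have hjlt : si + (q - posOf σ i si) < (threads i).length := by omega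
  have hmid := posOf_add hil hcont (j := si + (q - posOf σ i si)) (by omega) hjlt
  have hq : posOf σ i (si + (q - posOf σ i si)) = q := by omega
  have hg := get_posOf hil (List.getElem?_eq_getElem hjlt)
  rw [hq] at hg
  exact ⟨_, hg⟩

end Aux2

/-- for a 1-writer program with outer blocks given as the suffixes of the
threads starting at `s i`, if the conflict graph on the outer blocks has a directed
cycle, then there is no SC interleaving of the block-program (i.e., no SC interleaving
in which each outer block appears contiguously). -/
theorem stmt5 {V : Type} (k : ℕ) (threads : Fin k → List (Event V))
    (hw : OneWriter threads)
    (s : Fin k → ℕ) (t : Fin k)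
    (hcyc : Relation.TransGen (ConflictEdge threads s) t t) :
    ¬ ∃ σ : List (Fin k × Event V),
        IsInterleaving threads σ ∧ SC (σ.map Prod.snd) ∧
        ∀ i, ContiguousFrom σ i (s i) := by
  rintro ⟨σ, hil, hsc, hcont⟩
  have hedge : ∀ a b : Fin k, ConflictEdge threads s a b →
      posOf σ a ((threads a).length - 1) < posOf σ b ((threads b).length - 1) := by
    rintro tr tw ⟨hne, x, d, d', jr, jw, hdd, hsr, hread, hsw, hwrite, hlast⟩
    obtain ⟨hjr, -⟩ := List.getElem?_eq_some_iff.1 hread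
    obtain ⟨hjw, -⟩ := List.getElem?_eq_some_iff.1 hwrite
    have hpr : σ[posOf σ tr jr]? = some (tr, Event.read x d) := get_posOf hil hread
    have hpw : σ[posOf σ tw jw]? = some (tw, Event.write x d') := get_posOf hil hwrite
    set pr := posOf σ tr jr with hprdef
    set pw := posOf σ tw jw with hpwdef
    -- SC gives a preceding write of value d
    have hmr : (σ.map Prod.snd)[pr]? = some (Event.read x d) := by
      rw [List.getElem?_map, hpr]; rfl
    obtain ⟨q, hqpr, hqw, hbet⟩ := hsc pr x d hmr
    rw [List.getElem?_map] at hqw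
    cases hσq : σ[q]? with
    | none => rw [hσq] at hqw; exact absurd hqw (by simp)
    | some a =>
    rw [hσq] at hqw
    obtain ⟨iq, e⟩ := a
    have he : e = Event.write x d := by simpa using hqw
    subst he
    obtain ⟨m, hm, hqeq⟩ := pos_index hil hσq
    have hiq : iq = tw := by
      refine hw x iq tw ⟨Event.write x d, List.mem_of_getElem? hm, by simp [writesTo]⟩
        ⟨Event.write x d', List.mem_of_getElem? hwrite, by simp [writesTo]⟩
    rw [hiq] at hm hqeq
    have hmjw : m < jw := by
      rcases lt_trichotomy m jw with h | h | h
      · exact h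
      · subst h; rw [hwrite] at hm; simp at hm; exact absurd hm.symm hdd
      · exact absurd hm (hlast m d h)
    have hqpw : q < pw := by rw [hqeq]; exact posOf_strictMono hil hmjw hjw
    have hprpw : pr < pw := by
      rcases lt_trichotomy pr pw with h | h | h
      · exact h
      · exfalso; rw [← h, hpr] at hpw; simp at hpw
      · exfalso
        refine hbet pw hqpw h d' (Ne.symm hdd) ?_
        rw [List.getElem?_map, hpw]; rfl
    -- interval reasoning
    have hstr : s tr < (threads tr).length := lt_of_le_of_lt hsr hjr
    have hstw : s tw < (threads tw).length := lt_of_le_of_lt hsw hjw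
    have hetr := posOf_add hil (hcont tr) (j := (threads tr).length - 1)
      (by omega) (by omega)
    have hetw := posOf_add hil (hcont tw) (j := (threads tw).length - 1)
      (by omega) (by omega)
    have hprv := posOf_add hil (hcont tr) hsr hjr
    have hpwv := posOf_add hil (hcont tw) hsw hjw
    rw [← hprdef] at hprv
    rw [← hpwdef] at hpwv
    by_contra hnlt
    push_neg at hnlt
    -- common point: max of the two interval starts
    have h2r : max (posOf σ tr (s tr)) (posOf σ tw (s tw)) ≤
        posOf σ tr ((threads tr).length - 1) := by omega
    have h2w : max (posOf σ tr (s tr)) (posOf σ tw (s tw)) ≤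
        posOf σ tw ((threads tw).length - 1) := by omega
    obtain ⟨e1, he1⟩ := interval_mem hil (hcont tr) hstr (le_max_left _ _) h2r
    obtain ⟨e2, he2⟩ := interval_mem hil (hcont tw) hstw (le_max_right _ _) h2w
    rw [he1] at he2
    exact hne (by simpa using congrArg (Option.map Prod.fst) he2)
  have hmono : ∀ a b : Fin k, Relation.TransGen (ConflictEdge threads s) a b →
      posOf σ a ((threads a).length - 1) < posOf σ b ((threads b).length - 1) := by
    intro a b h
    induction h with
    | single h => exact hedge _ _ h
    | tail _ h' ih => exact ih.trans (hedge _ _ h')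
  exact absurd (hmono t t hcyc) (lt_irrefl _)
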